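/- Let φ be an analytic selfmap of the unit disc D. Every Bloch function u induces a bounded weighted composition operator uC_φ : B → B (i.e. M(B,φ) = B) if and only if (1) sup_{z∈D}|φ(z)| < 1 and (2) φ is a multiplier of the Bloch space. -/

import Mathlib

open Complex Metric Set Filter MeasureTheory Finset

noncomputable section

/-- The open unit disc in ℂ. -/
def D1 : Set ℂ := Metric.ball 0 1

/-- Analytic (holomorphic) on the open unit disc. -/
def AnalyticOnD (f : ℂ → ℂ) : Prop := DifferentiableOn ℂ f D1

/-- Bloch seminorm. -/
def blochSemi (f : ℂ → ℂ) : ℝ := ⨆ z : D1, (1 - ‖(z : ℂ)‖ ^ 2) * ‖deriv f (z : ℂ)‖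

/-- Bloch norm. -/
def blochNorm (f : ℂ → ℂ) : ℝ := ‖f 0‖ + blochSemi f

/-- Membership in the Bloch space. -/
def InBloch (f : ℂ → ℂ) : Prop :=
  AnalyticOnD f ∧ ∃ C, ∀ z ∈ D1, (1 - ‖z‖ ^ 2) * ‖deriv f z‖ ≤ C

/-- Sup norm over the unit disc. -/
def supNormD (f : ℂ → ℂ) : ℝ := ⨆ z : D1, ‖f (z : ℂ)‖

/-- Weighted composition operator uC_φ. -/
def wco (u φ : ℂ → ℂ) (f : ℂ → ℂ) : ℂ → ℂ := fun z => u z * f (φ z)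

/-- Multiplication operator M_u. -/
def mult (u : ℂ → ℂ) (f : ℂ → ℂ) : ℂ → ℂ := fun z => u z * f z

/-- The weight u_{(n)} = ∏_{j=0}^{n-1} u ∘ φ_j. -/
def wprod (u φ : ℂ → ℂ) (n : ℕ) : ℂ → ℂ := fun z => ∏ j ∈ Finset.range n, u (φ^[j] z)

/-- Boundedness of an operator on the Bloch space. -/
def BddOnBloch (T : (ℂ → ℂ) → (ℂ → ℂ)) : Prop :=
  ∃ C, ∀ f, InBloch f → InBloch (T f) ∧ blochNorm (T f) ≤ C * blochNorm f

/-- Operator norm on the Bloch space. -/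
def opNormB (T : (ℂ → ℂ) → (ℂ → ℂ)) : ℝ :=
  sInf {C : ℝ | 0 ≤ C ∧ ∀ f, InBloch f → blochNorm (T f) ≤ C * blochNorm f}

/-- Invertibility of an operator on the Bloch space (bounded two-sided inverse). -/
def InvertibleOnBloch (T : (ℂ → ℂ) → (ℂ → ℂ)) : Prop :=
  BddOnBloch T ∧ ∃ S, BddOnBloch S ∧
    ∀ f, InBloch f → Set.EqOn (S (T f)) f D1 ∧ Set.EqOn (T (S f)) f D1

/-- Spectrum of an operator acting on the Bloch space. -/
def blochSpectrum (T : (ℂ → ℂ) → (ℂ → ℂ)) : Set ℂ :=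
  {lam | ¬ InvertibleOnBloch (fun f z => lam * f z - T f z)}

/-- Automorphism of the unit disc (Möbius form). -/
def IsDiscAuto (φ : ℂ → ℂ) : Prop :=
  ∃ lam a : ℂ, ‖lam‖ = 1 ∧ a ∈ D1 ∧ ∀ z, φ z = lam * (a - z) / (1 - (starRingEnd ℂ) a * z)

/-- Hyperbolic distance on the unit disc. -/
def hypDist (z w : ℂ) : ℝ :=
  (1 / 2) * Real.log ((1 + ‖(z - w) / (1 - (starRingEnd ℂ) z * w)‖) /
    (1 - ‖(z - w) / (1 - (starRingEnd ℂ) z * w)‖))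

/-- The disc algebra A(𝔻). -/
def InDiscAlgebra (u : ℂ → ℂ) : Prop :=
  ContinuousOn u (Metric.closedBall 0 1) ∧ AnalyticOnD u

/-- u is bounded away from zero on the unit disc. -/
def BoundedAwayFromZero (u : ℂ → ℂ) : Prop := ∃ δ > 0, ∀ z ∈ D1, δ ≤ ‖u z‖

/-- Parabolic automorphism with unique fixed point a on the unit circle (φ'(a)=1). -/
def IsParabolicAuto (φ : ℂ → ℂ) (a : ℂ) : Prop :=
  IsDiscAuto φ ∧ ‖a‖ = 1 ∧ φ a = a ∧ deriv φ a = 1 ∧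
    ∀ w, ‖w‖ ≤ 1 → φ w = w → w = a

/-- Hyperbolic automorphism with attractive fixed point a and repulsive fixed point b. -/
def IsHyperbolicAuto (φ : ℂ → ℂ) (a b : ℂ) : Prop :=
  IsDiscAuto φ ∧ ‖a‖ = 1 ∧ ‖b‖ = 1 ∧ a ≠ b ∧ φ a = a ∧ φ b = b ∧
    ∃ μ : ℝ, 0 < μ ∧ μ < 1 ∧ deriv φ a = (μ : ℂ)

/-- Square of the Dirichlet norm (normalized area measure on 𝔻). -/
def dirichletNormSq (f : ℂ → ℂ) : ℝ :=
  ‖f 0‖ ^ 2 + (1 / Real.pi) * ∫ z in D1, ‖deriv f z‖ ^ 2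

/-- Dirichlet norm. -/
def dirichletNorm (f : ℂ → ℂ) : ℝ := Real.sqrt (dirichletNormSq f)

/-- Membership in the Dirichlet space. -/
def InDirichlet (f : ℂ → ℂ) : Prop :=
  AnalyticOnD f ∧ MeasureTheory.IntegrableOn (fun z => ‖deriv f z‖ ^ 2) D1

/-- Boundedness of an operator on the Dirichlet space. -/
def BddOnDirichlet (T : (ℂ → ℂ) → (ℂ → ℂ)) : Prop :=
  ∃ C, ∀ f, InDirichlet f → InDirichlet (T f) ∧ dirichletNorm (T f) ≤ C * dirichletNorm f

/-- Operator norm on the Dirichlet space. -/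
def opNormDir (T : (ℂ → ℂ) → (ℂ → ℂ)) : ℝ :=
  sInf {C : ℝ | 0 ≤ C ∧ ∀ f, InDirichlet f → dirichletNorm (T f) ≤ C * dirichletNorm f}

/-- Invertibility of an operator on the Dirichlet space. -/
def InvertibleOnDirichlet (T : (ℂ → ℂ) → (ℂ → ℂ)) : Prop :=
  BddOnDirichlet T ∧ ∃ S, BddOnDirichlet S ∧
    ∀ f, InDirichlet f → Set.EqOn (S (T f)) f D1 ∧ Set.EqOn (T (S f)) f D1

/-- Spectrum of an operator on the Dirichlet space. -/
def dirichletSpectrum (T : (ℂ → ℂ) → (ℂ → ℂ)) : Set ℂ :=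
  {lam | ¬ InvertibleOnDirichlet (fun f z => lam * f z - T f z)}

/-- Operator norm of M_{u'} : B → H^∞_{v₁}. -/
def opNormBtoHv1 (u : ℂ → ℂ) : ℝ :=
  sInf {C : ℝ | 0 ≤ C ∧ ∀ f, InBloch f → ∀ z ∈ D1,
    (1 - ‖z‖ ^ 2) * ‖deriv u z * f z‖ ≤ C * blochNorm f}

/-- Operator norm of M_{u'} : 𝒟 → A². -/
def opNormDtoA2 (u : ℂ → ℂ) : ℝ :=
  sInf {C : ℝ | 0 ≤ C ∧ ∀ f, InDirichlet f →
    Real.sqrt ((1 / Real.pi) * ∫ z in D1, ‖deriv u z * f z‖ ^ 2) ≤ C * dirichletNorm f}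

/-- The logarithmic weight log(e/(1-|z|²)). -/
def logWeight (z : ℂ) : ℝ := Real.log (Real.exp 1 / (1 - ‖z‖ ^ 2))

/-- Characterization of multipliers of the Bloch space: u ∈ H^∞ and the log condition. -/
def MultBChar (u : ℂ → ℂ) : Prop :=
  (∃ M, ∀ z ∈ D1, ‖u z‖ ≤ M) ∧
  (∃ M, ∀ z ∈ D1, (1 - ‖z‖ ^ 2) * ‖deriv u z‖ * logWeight z ≤ M)

-- Auxiliary lemmas

lemma zero_mem_D1 : (0:ℂ) ∈ D1 := by simp [D1]

instance : Nonempty D1 := ⟨⟨0, zero_mem_D1⟩⟩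

lemma mem_D1 {z : ℂ} : z ∈ D1 ↔ ‖z‖ < 1 := mem_ball_zero_iff

lemma isOpen_D1 : IsOpen D1 := isOpen_ball

lemma one_sub_sq_pos {z : ℂ} (hz : z ∈ D1) : 0 < 1 - ‖z‖ ^ 2 := by
  have h : ‖z‖ < 1 := mem_D1.mp hz
  nlinarith [norm_nonneg z]

lemma blochSemi_nonneg (f : ℂ → ℂ) : 0 ≤ blochSemi f := by
  apply Real.iSup_nonneg
  intro ⟨z, hz⟩
  exact mul_nonneg (le_of_lt (one_sub_sq_pos hz)) (norm_nonneg _)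

lemma blochNorm_nonneg (f : ℂ → ℂ) : 0 ≤ blochNorm f :=
  add_nonneg (norm_nonneg _) (blochSemi_nonneg f)

lemma pointwise_le_blochSemi {f : ℂ → ℂ} (hf : InBloch f) {z : ℂ} (hz : z ∈ D1) :
    (1 - ‖z‖ ^ 2) * ‖deriv f z‖ ≤ blochSemi f := by
  obtain ⟨C, hC⟩ := hf.2
  have hbdd : BddAbove (Set.range fun w : D1 => (1 - ‖(w : ℂ)‖ ^ 2) * ‖deriv f (w : ℂ)‖) := by
    refine ⟨C, ?_⟩
    rintro x ⟨⟨w, hw⟩, rfl⟩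
    exact hC w hw
  exact le_ciSup hbdd ⟨z, hz⟩

lemma blochSemi_le {f : ℂ → ℂ} {C : ℝ} (h : ∀ z ∈ D1, (1 - ‖z‖ ^ 2) * ‖deriv f z‖ ≤ C) :
    blochSemi f ≤ C := ciSup_le fun ⟨z, hz⟩ => h z hz

lemma blochSemi_le_blochNorm (f : ℂ → ℂ) : blochSemi f ≤ blochNorm f := by
  unfold blochNorm; nlinarith [norm_nonneg (f 0)]
-- PART 2: derivative formulas
lemma diffAt_of_diffOn {f : ℂ → ℂ} (hf : AnalyticOnD f) {z : ℂ} (hz : z ∈ D1) :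
    DifferentiableAt ℂ f z := hf.differentiableAt (isOpen_D1.mem_nhds hz)

lemma wco_diffOn {u φ f : ℂ → ℂ} (hu : AnalyticOnD u) (hφ : AnalyticOnD φ)
    (hmaps : Set.MapsTo φ D1 D1) (hf : AnalyticOnD f) :
    DifferentiableOn ℂ (wco u φ f) D1 := by
  intro z hz
  exact ((diffAt_of_diffOn hu hz).mul
    (((diffAt_of_diffOn hf (hmaps hz)).comp z (diffAt_of_diffOn hφ hz)))).differentiableWithinAt

lemma deriv_wco {u φ f : ℂ → ℂ} (hu : AnalyticOnD u) (hφ : AnalyticOnD φ)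
    (hmaps : Set.MapsTo φ D1 D1) (hf : AnalyticOnD f) {z : ℂ} (hz : z ∈ D1) :
    deriv (wco u φ f) z = deriv u z * f (φ z) + u z * (deriv f (φ z) * deriv φ z) := by
  have h1 := (diffAt_of_diffOn hu hz).hasDerivAt
  have h2 := (diffAt_of_diffOn hφ hz).hasDerivAt
  have h3 := (diffAt_of_diffOn hf (hmaps hz)).hasDerivAt
  have hcomp : HasDerivAt (fun w => f (φ w)) (deriv f (φ z) * deriv φ z) z := h3.comp z h2
  exact (h1.mul hcomp).deriv

lemma mult_diffOn {u f : ℂ → ℂ} (hu : AnalyticOnD u) (hf : AnalyticOnD f) :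
    DifferentiableOn ℂ (mult u f) D1 := fun z hz =>
  ((diffAt_of_diffOn hu hz).mul (diffAt_of_diffOn hf hz)).differentiableWithinAt

lemma deriv_mult {u f : ℂ → ℂ} (hu : AnalyticOnD u) (hf : AnalyticOnD f) {z : ℂ} (hz : z ∈ D1) :
    deriv (mult u f) z = deriv u z * f z + u z * deriv f z := by
  have := ((diffAt_of_diffOn hu hz).hasDerivAt.mul (diffAt_of_diffOn hf hz).hasDerivAt).deriv
  rw [← this]; rfl

lemma inBloch_id : InBloch (fun z : ℂ => z) := by
  refine ⟨differentiable_id.differentiableOn, 1, fun z hz => ?_⟩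
  rw [deriv_id'']
  simp only [norm_one, mul_one]
  nlinarith [norm_nonneg z]

lemma blochNorm_id : blochNorm (fun z : ℂ => z) = 1 := by
  have hsemi : blochSemi (fun z : ℂ => z) = 1 := by
    apply le_antisymm
    · apply blochSemi_le
      intro z hz
      rw [deriv_id'']
      simp only [norm_one, mul_one]
      nlinarith [norm_nonneg z]
    · have := pointwise_le_blochSemi inBloch_id zero_mem_D1
      simpa using this
  simp [blochNorm, hsemi]

lemma inBloch_const (c : ℂ) : InBloch (fun _ : ℂ => c) := by
  refine ⟨(differentiable_const c).differentiableOn, 0, fun z hz => ?_⟩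
  simp [deriv_const]

lemma blochNorm_const (c : ℂ) : blochNorm (fun _ : ℂ => c) = ‖c‖ := by
  have hsemi : blochSemi (fun _ : ℂ => c) = 0 := by
    apply le_antisymm
    · apply blochSemi_le; intro z hz; simp [deriv_const]
    · exact blochSemi_nonneg _
  simp [blochNorm, hsemi]
-- PART 3: growth lemma
lemma deriv_contOn {f : ℂ → ℂ} (hf : AnalyticOnD f) : ContinuousOn (deriv f) D1 := by
  have h : AnalyticOnNhd ℂ f D1 := hf.analyticOnNhd isOpen_D1
  exact h.deriv.continuousOn

lemma growth_sub {f : ℂ → ℂ} (hf : InBloch f) {z : ℂ} (hz : z ∈ D1) :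
    ‖f z - f 0‖ ≤ blochSemi f * (-Real.log (1 - ‖z‖)) := by
  set r : ℝ := ‖z‖ with hr
  have hr0 : 0 ≤ r := norm_nonneg z
  have hr1 : r < 1 := mem_D1.mp hz
  set s := blochSemi f with hs
  have hs0 : 0 ≤ s := blochSemi_nonneg f
  -- the path g t = f (t z)
  have hmem : ∀ t : ℝ, t ∈ Set.uIcc (0:ℝ) 1 → (↑t * z) ∈ D1 := by
    intro t ht
    rw [Set.uIcc_of_le (by norm_num : (0:ℝ) ≤ 1)] at ht
    rw [mem_D1]
    rw [norm_mul, Complex.norm_real]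
    have habs : |t| ≤ 1 := by rw [abs_le]; exact ⟨by linarith [ht.1], ht.2⟩
    calc |t| * ‖z‖ ≤ 1 * ‖z‖ := mul_le_mul_of_nonneg_right habs hr0
      _ = ‖z‖ := one_mul _
      _ < 1 := hr1
  have hpath : ∀ t : ℝ, t ∈ Set.uIcc (0:ℝ) 1 →
      HasDerivAt (fun t : ℝ => f (↑t * z)) (deriv f (↑t * z) * z) t := by
    intro t ht
    have h1 : HasDerivAt (fun w : ℂ => f (w * z)) (deriv f (↑t * z) * z) ↑t := by
      have hd := (diffAt_of_diffOn hf.1 (hmem t ht)).hasDerivAt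
      have h2 : HasDerivAt (fun w : ℂ => w * z) z ↑t := by
        simpa using (hasDerivAt_id (↑t : ℂ)).mul_const z
      exact hd.comp (↑t : ℂ) h2
    exact h1.comp_ofReal
  have hcont : ContinuousOn (fun t : ℝ => deriv f (↑t * z) * z) (Set.uIcc (0:ℝ) 1) := by
    apply ContinuousOn.mul _ continuousOn_const
    apply (deriv_contOn hf.1).comp
    · exact (Complex.continuous_ofReal.continuousOn.mul continuousOn_const)
    · intro t ht; exact hmem t ht
  have hint : IntervalIntegrable (fun t : ℝ => deriv f (↑t * z) * z) volume 0 1 := by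
    apply hcont.intervalIntegrable
  have hftc := intervalIntegral.integral_eq_sub_of_hasDerivAt hpath hint
  have heq : f z - f 0 = ∫ t in (0:ℝ)..1, deriv f (↑t * z) * z := by
    rw [hftc]; norm_num
  -- bound the integrand
  have hbound : ∀ t : ℝ, t ∈ Set.Icc (0:ℝ) 1 →
      ‖deriv f (↑t * z) * z‖ ≤ s * (r / (1 - t * r)) := by
    intro t ht
    have htz : (↑t * z) ∈ D1 := hmem t (by rw [Set.uIcc_of_le (by norm_num : (0:ℝ)≤1)]; exact ht)
    have hpt := pointwise_le_blochSemi hf htz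
    have hnorm : ‖(↑t : ℂ) * z‖ = t * r := by
      rw [norm_mul, Complex.norm_real, Real.norm_eq_abs, _root_.abs_of_nonneg ht.1]
    have htr1 : t * r < 1 := by
      calc t * r ≤ 1 * r := by apply mul_le_mul_of_nonneg_right ht.2 hr0
        _ < 1 := by linarith
    have htr0 : 0 ≤ t * r := mul_nonneg ht.1 hr0
    have hd1 : 0 < 1 - (t*r)^2 := by nlinarith
    have hd2 : 0 < 1 - t*r := by nlinarith
    have hle : 1 - t * r ≤ 1 - (t*r)^2 := by nlinarith
    rw [norm_mul]
    have h1 : ‖deriv f (↑t * z)‖ ≤ s / (1 - (t*r)^2) := by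
      rw [le_div_iff₀ hd1]
      rw [hnorm] at hpt
      linarith [hpt]
    calc ‖deriv f (↑t * z)‖ * ‖z‖ ≤ (s / (1 - (t*r)^2)) * r := by
          apply mul_le_mul h1 (le_of_eq rfl) hr0 (by positivity)
      _ ≤ (s / (1 - t*r)) * r := by
          apply mul_le_mul_of_nonneg_right _ hr0
          apply div_le_div_of_nonneg_left hs0 hd2 hle
      _ = s * (r / (1 - t*r)) := by ring
  -- the comparison integral
  have hcont2 : ContinuousOn (fun t : ℝ => s * (r / (1 - t * r))) (Set.uIcc (0:ℝ) 1) := by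
    apply ContinuousOn.mul continuousOn_const
    apply ContinuousOn.div continuousOn_const
    · exact (continuousOn_const.sub (continuousOn_id.mul continuousOn_const))
    · intro t ht
      rw [Set.uIcc_of_le (by norm_num : (0:ℝ)≤1)] at ht
      have : t * r < 1 := by
        calc t * r ≤ 1 * r := mul_le_mul_of_nonneg_right ht.2 hr0
          _ < 1 := by linarith
      intro h; rw [sub_eq_zero] at h; linarith [h.symm]
  have hint2 : IntervalIntegrable (fun t : ℝ => s * (r / (1 - t * r))) volume 0 1 :=
    hcont2.intervalIntegrable
  have hival : (∫ t in (0:ℝ)..1, s * (r / (1 - t * r))) = s * (-Real.log (1 - r)) := by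
    have hanti : ∀ t : ℝ, t ∈ Set.uIcc (0:ℝ) 1 →
        HasDerivAt (fun t : ℝ => -s * Real.log (1 - t * r)) (s * (r / (1 - t * r))) t := by
      intro t ht
      rw [Set.uIcc_of_le (by norm_num : (0:ℝ)≤1)] at ht
      have htr1 : t * r < 1 := by
        calc t * r ≤ 1 * r := mul_le_mul_of_nonneg_right ht.2 hr0
          _ < 1 := by linarith
      have hne : 1 - t * r ≠ 0 := by intro h; rw [sub_eq_zero] at h; linarith [h.symm]
      have h1 : HasDerivAt (fun t : ℝ => 1 - t * r) (-r) t := by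
        simpa using ((hasDerivAt_id t).mul_const r).const_sub 1
      have h2 := (h1.log hne).const_mul (-s)
      exact h2.congr_deriv (by ring)
    rw [intervalIntegral.integral_eq_sub_of_hasDerivAt hanti hint2]
    norm_num
  calc ‖f z - f 0‖ = ‖∫ t in (0:ℝ)..1, deriv f (↑t * z) * z‖ := by rw [heq]
    _ ≤ ∫ t in (0:ℝ)..1, ‖deriv f (↑t * z) * z‖ :=
        intervalIntegral.norm_integral_le_integral_norm (by norm_num)
    _ ≤ ∫ t in (0:ℝ)..1, s * (r / (1 - t * r)) := by
        apply intervalIntegral.integral_mono_on (by norm_num) hint.norm hint2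
        exact hbound
    _ = s * (-Real.log (1 - r)) := hival

lemma log_nonneg_aux {t : ℝ} (ht0 : 0 ≤ t) (ht1 : t < 1) : 0 ≤ -Real.log (1 - t) := by
  rw [neg_nonneg]
  apply Real.log_nonpos <;> linarith

lemma growth {f : ℂ → ℂ} (hf : InBloch f) {z : ℂ} (hz : z ∈ D1) :
    ‖f z‖ ≤ blochNorm f * (1 - Real.log (1 - ‖z‖)) := by
  have h1 := growth_sub hf hz
  have h2 : ‖f z‖ ≤ ‖f 0‖ + ‖f z - f 0‖ := by
    calc ‖f z‖ = ‖f 0 + (f z - f 0)‖ := by ring_nf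
      _ ≤ ‖f 0‖ + ‖f z - f 0‖ := norm_add_le _ _
  have hl := log_nonneg_aux (norm_nonneg z) (mem_D1.mp hz)
  have hs0 := blochSemi_nonneg f
  have hn0 := norm_nonneg (f 0)
  unfold blochNorm
  nlinarith [h1, h2]

lemma growth_le_r {f : ℂ → ℂ} (hf : InBloch f) {z : ℂ} (hz : z ∈ D1) {r : ℝ}
    (hzr : ‖z‖ ≤ r) (hr1 : r < 1) :
    ‖f z‖ ≤ blochNorm f * (1 - Real.log (1 - r)) := by
  have h := growth hf hz
  have hmono : (1 : ℝ) - Real.log (1 - ‖z‖) ≤ 1 - Real.log (1 - r) := by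
    have : Real.log (1 - r) ≤ Real.log (1 - ‖z‖) := by
      apply Real.log_le_log (by linarith) (by linarith)
    linarith
  calc ‖f z‖ ≤ blochNorm f * (1 - Real.log (1 - ‖z‖)) := h
    _ ≤ blochNorm f * (1 - Real.log (1 - r)) :=
        mul_le_mul_of_nonneg_left hmono (blochNorm_nonneg f)
-- PART 4: test functions
def tf (a : ℂ) (z : ℂ) : ℂ := Complex.log (2 / (1 - (starRingEnd ℂ) a * z))
def Lam (a : ℂ) : ℝ := Real.log (2 / (1 - ‖a‖ ^ 2))

lemma one_sub_conj_re {a z : ℂ} (ha : a ∈ D1) (hz : z ∈ D1) :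
    (0:ℝ) < (1 - (starRingEnd ℂ) a * z).re := by
  have h1 : ((starRingEnd ℂ) a * z).re ≤ ‖(starRingEnd ℂ) a * z‖ := Complex.re_le_norm _
  have h2 : ‖(starRingEnd ℂ) a * z‖ = ‖a‖ * ‖z‖ := by
    rw [norm_mul, RCLike.norm_conj]
  have ha1 : ‖a‖ < 1 := mem_D1.mp ha
  have hz1 : ‖z‖ < 1 := mem_D1.mp hz
  have h3 : ‖a‖ * ‖z‖ < 1 := by nlinarith [norm_nonneg a, norm_nonneg z]
  simp only [Complex.sub_re, Complex.one_re]
  rw [h2] at h1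
  linarith

lemma one_sub_conj_ne {a z : ℂ} (ha : a ∈ D1) (hz : z ∈ D1) :
    1 - (starRingEnd ℂ) a * z ≠ 0 := by
  intro h
  have := one_sub_conj_re ha hz
  rw [h] at this
  simp at this

lemma norm_one_sub_conj_lb {a z : ℂ} (_ : a ∈ D1) (_ : z ∈ D1) :
    1 - ‖a‖ * ‖z‖ ≤ ‖1 - (starRingEnd ℂ) a * z‖ := by
  calc 1 - ‖a‖ * ‖z‖ = ‖(1:ℂ)‖ - ‖(starRingEnd ℂ) a * z‖ := by
        rw [norm_one, norm_mul, RCLike.norm_conj]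
    _ ≤ ‖1 - (starRingEnd ℂ) a * z‖ := norm_sub_norm_le _ _

lemma norm_one_sub_conj_lb' {a z : ℂ} (ha : a ∈ D1) (hz : z ∈ D1) :
    1 - ‖z‖ ≤ ‖1 - (starRingEnd ℂ) a * z‖ := by
  have h := norm_one_sub_conj_lb ha hz
  have : ‖a‖ * ‖z‖ ≤ ‖z‖ := by
    have := (mem_D1.mp ha).le
    nlinarith [norm_nonneg z]
  linarith

lemma norm_one_sub_conj_lb'' {a z : ℂ} (ha : a ∈ D1) (hz : z ∈ D1) :
    1 - ‖a‖ ≤ ‖1 - (starRingEnd ℂ) a * z‖ := by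
  have h := norm_one_sub_conj_lb ha hz
  have : ‖a‖ * ‖z‖ ≤ ‖a‖ := by
    have := (mem_D1.mp hz).le
    nlinarith [norm_nonneg a]
  linarith

lemma norm_one_sub_conj_ub {a z : ℂ} (ha : a ∈ D1) (hz : z ∈ D1) :
    ‖1 - (starRingEnd ℂ) a * z‖ ≤ 2 := by
  have ha1 : ‖a‖ < 1 := mem_D1.mp ha
  have hz1 : ‖z‖ < 1 := mem_D1.mp hz
  calc ‖1 - (starRingEnd ℂ) a * z‖ ≤ ‖(1:ℂ)‖ + ‖(starRingEnd ℂ) a * z‖ := norm_sub_le _ _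
    _ = 1 + ‖a‖ * ‖z‖ := by rw [norm_one, norm_mul, RCLike.norm_conj]
    _ ≤ 2 := by nlinarith [norm_nonneg a, norm_nonneg z]

lemma slit_mem {a z : ℂ} (ha : a ∈ D1) (hz : z ∈ D1) :
    2 / (1 - (starRingEnd ℂ) a * z) ∈ Complex.slitPlane := by
  rw [Complex.mem_slitPlane_iff]
  left
  have hre := one_sub_conj_re ha hz
  have hne := one_sub_conj_ne ha hz
  have hns : 0 < Complex.normSq (1 - (starRingEnd ℂ) a * z) := Complex.normSq_pos.mpr hne
  rw [Complex.div_re]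
  have h2re : (2:ℂ).re = 2 := by norm_num
  have h2im : (2:ℂ).im = 0 := by norm_num
  rw [h2re, h2im]
  have : (0:ℝ) < 2 * (1 - (starRingEnd ℂ) a * z).re / Complex.normSq (1 - (starRingEnd ℂ) a * z) := by
    positivity
  simpa using this

lemma tf_hasDerivAt {a z : ℂ} (ha : a ∈ D1) (hz : z ∈ D1) :
    HasDerivAt (tf a) ((starRingEnd ℂ) a / (1 - (starRingEnd ℂ) a * z)) z := by
  have hne := one_sub_conj_ne ha hz
  have h1 : HasDerivAt (fun w : ℂ => 1 - (starRingEnd ℂ) a * w) (-((starRingEnd ℂ) a)) z := by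
    simpa using ((hasDerivAt_id z).const_mul ((starRingEnd ℂ) a)).const_sub 1
  have h2 : HasDerivAt (fun w : ℂ => 2 / (1 - (starRingEnd ℂ) a * w))
      (2 * (starRingEnd ℂ) a / (1 - (starRingEnd ℂ) a * z) ^ 2) z := by
    have h4 := (h1.inv hne).const_mul (2:ℂ)
    simp only [neg_neg, div_eq_mul_inv] at h4 ⊢
    exact h4.congr_deriv (by ring)
  have h5 := h2.clog (slit_mem ha hz)
  exact h5.congr_deriv (by field_simp)

lemma tf_diffOn {a : ℂ} (ha : a ∈ D1) : AnalyticOnD (tf a) := by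
  intro z hz
  exact (tf_hasDerivAt ha hz).differentiableAt.differentiableWithinAt

lemma tf_deriv {a z : ℂ} (ha : a ∈ D1) (hz : z ∈ D1) :
    deriv (tf a) z = (starRingEnd ℂ) a / (1 - (starRingEnd ℂ) a * z) :=
  (tf_hasDerivAt ha hz).deriv
-- PART 5: test function bounds
lemma norm_log_le {w : ℂ} (hw : w ≠ 0) : ‖Complex.log w‖ ≤ |Real.log ‖w‖| + Real.pi := by
  have h1 : ‖Complex.log w‖ ≤ |(Complex.log w).re| + |(Complex.log w).im| := by
    exact Complex.norm_le_abs_re_add_abs_im _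
  rw [Complex.log_re, Complex.log_im] at h1
  have h2 : |w.arg| ≤ Real.pi := Complex.abs_arg_le_pi w
  have h3 : ‖w‖ = ‖w‖ := rfl
  rw [h3] at h1
  linarith

lemma norm_tf_le {a z : ℂ} (ha : a ∈ D1) (hz : z ∈ D1) :
    ‖tf a z‖ ≤ Real.log (2 / ‖1 - (starRingEnd ℂ) a * z‖) + Real.pi := by
  have hne := one_sub_conj_ne ha hz
  have hnorm_pos : 0 < ‖1 - (starRingEnd ℂ) a * z‖ := norm_pos_iff.mpr hne
  have hw : (2 : ℂ) / (1 - (starRingEnd ℂ) a * z) ≠ 0 := by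
    apply div_ne_zero (by norm_num) hne
  have h := norm_log_le hw
  have hval : ‖(2:ℂ) / (1 - (starRingEnd ℂ) a * z)‖ = 2 / ‖1 - (starRingEnd ℂ) a * z‖ := by
    rw [norm_div]; norm_num
  rw [hval] at h
  have hub := norm_one_sub_conj_ub ha hz
  have hge1 : (1:ℝ) ≤ 2 / ‖1 - (starRingEnd ℂ) a * z‖ := by
    rw [le_div_iff₀ hnorm_pos]; linarith
  have hlog_nonneg : 0 ≤ Real.log (2 / ‖1 - (starRingEnd ℂ) a * z‖) := Real.log_nonneg hge1
  rw [_root_.abs_of_nonneg hlog_nonneg] at h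
  exact h

lemma tf_pointwise {a : ℂ} (ha : a ∈ D1) :
    ∀ z ∈ D1, (1 - ‖z‖ ^ 2) * ‖deriv (tf a) z‖ ≤ 2 := by
  intro z hz
  rw [tf_deriv ha hz]
  have hlb := norm_one_sub_conj_lb' ha hz
  have hz1 : ‖z‖ < 1 := mem_D1.mp hz
  have hz0 : (0:ℝ) ≤ ‖z‖ := norm_nonneg z
  have hpos : (0:ℝ) < ‖1 - (starRingEnd ℂ) a * z‖ :=
    norm_pos_iff.mpr (one_sub_conj_ne ha hz)
  rw [norm_div, RCLike.norm_conj]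
  have ha1 : ‖a‖ < 1 := mem_D1.mp ha
  rw [div_eq_mul_inv, ← mul_assoc]
  calc (1 - ‖z‖ ^ 2) * ‖a‖ * ‖1 - (starRingEnd ℂ) a * z‖⁻¹
      ≤ (1 - ‖z‖ ^ 2) * 1 * (1 - ‖z‖)⁻¹ := by
        apply mul_le_mul
        · apply mul_le_mul_of_nonneg_left ha1.le (by nlinarith)
        · apply inv_anti₀ (by linarith) hlb
        · positivity
        · nlinarith
    _ = 1 + ‖z‖ := by
        have hne : (1:ℝ) - ‖z‖ ≠ 0 := by linarith
        rw [mul_one, show (1 - ‖z‖^2 : ℝ) = (1+‖z‖)*(1-‖z‖) by ring, mul_assoc,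
          mul_inv_cancel₀ hne, mul_one]
    _ ≤ 2 := by linarith

lemma tf_inBloch {a : ℂ} (ha : a ∈ D1) : InBloch (tf a) :=
  ⟨tf_diffOn ha, 2, tf_pointwise ha⟩

lemma tf_semi_le {a : ℂ} (ha : a ∈ D1) : blochSemi (tf a) ≤ 2 :=
  blochSemi_le (tf_pointwise ha)

lemma tf_zero (a : ℂ) : tf a 0 = Complex.log 2 := by
  simp [tf]

lemma tf_blochNorm_le {a : ℂ} (ha : a ∈ D1) : blochNorm (tf a) ≤ 3 := by
  unfold blochNorm
  rw [tf_zero]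
  have h1 : ‖Complex.log 2‖ = Real.log 2 := by
    have : ((2:ℝ):ℂ) = (2:ℂ) := by norm_num
    rw [← this, ← Complex.ofReal_log (by norm_num : (0:ℝ) ≤ 2)]
    rw [Complex.norm_real, Real.norm_eq_abs, _root_.abs_of_nonneg (Real.log_nonneg (by norm_num : (1:ℝ) ≤ 2))]
  rw [h1]
  have := Real.log_two_lt_d9
  have := tf_semi_le ha
  linarith

lemma conj_mul_self (a : ℂ) : (starRingEnd ℂ) a * a = ((‖a‖ ^ 2 : ℝ) : ℂ) := by
  rw [mul_comm, Complex.mul_conj]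
  norm_cast
  rw [Complex.normSq_eq_norm_sq]

lemma Lam_pos {a : ℂ} (ha : a ∈ D1) : Real.log 2 ≤ Lam a := by
  unfold Lam
  apply Real.log_le_log (by norm_num)
  have h := one_sub_sq_pos ha
  rw [le_div_iff₀ h]
  nlinarith [sq_nonneg ‖a‖, norm_nonneg a]

lemma Lam_pos' {a : ℂ} (ha : a ∈ D1) : 0 < Lam a := by
  have := Lam_pos ha
  have := Real.log_two_gt_d9
  linarith

lemma tf_self {a : ℂ} (ha : a ∈ D1) : tf a a = ((Lam a : ℝ) : ℂ) := by
  unfold tf Lam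
  rw [conj_mul_self]
  have h := one_sub_sq_pos ha
  have h2 : (1:ℂ) - ((‖a‖^2 : ℝ) : ℂ) = (((1 - ‖a‖^2 : ℝ)) : ℂ) := by push_cast; ring
  rw [h2]
  have h3 : (2:ℂ) / (((1 - ‖a‖^2 : ℝ)) : ℂ) = (((2 / (1 - ‖a‖^2) : ℝ)) : ℂ) := by
    push_cast; ring
  rw [h3, ← Complex.ofReal_log (by positivity)]

lemma Lam_ge_neg_log {a : ℂ} (ha : a ∈ D1) : -Real.log (1 - ‖a‖) ≤ Lam a := by
  unfold Lam
  have ha1 : ‖a‖ < 1 := mem_D1.mp ha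
  have ha0 : (0:ℝ) ≤ ‖a‖ := norm_nonneg a
  have h1 : (0:ℝ) < 1 - ‖a‖ := by linarith
  have h2 : (0:ℝ) < 1 - ‖a‖^2 := by nlinarith
  rw [← Real.log_inv]
  apply Real.log_le_log (by positivity)
  rw [show (1 - ‖a‖)⁻¹ = 1/(1-‖a‖) from (one_div _).symm, div_le_div_iff₀ h1 h2]
  nlinarith
-- PART 6: squared test function
def tg (a : ℂ) (z : ℂ) : ℂ := (tf a z) ^ 2 / ((Lam a : ℝ) : ℂ)

lemma tg_hasDerivAt {a z : ℂ} (ha : a ∈ D1) (hz : z ∈ D1) :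
    HasDerivAt (tg a)
      (2 * tf a z * ((starRingEnd ℂ) a / (1 - (starRingEnd ℂ) a * z)) / ((Lam a : ℝ) : ℂ)) z := by
  have h1 := (tf_hasDerivAt ha hz).pow 2
  have h2 := h1.div_const ((Lam a : ℝ) : ℂ)
  exact h2.congr_deriv (by ring)

lemma tg_diffOn {a : ℂ} (ha : a ∈ D1) : AnalyticOnD (tg a) := fun z hz =>
  (tg_hasDerivAt ha hz).differentiableAt.differentiableWithinAt

lemma tg_deriv {a z : ℂ} (ha : a ∈ D1) (hz : z ∈ D1) :
    deriv (tg a) z = 2 * tf a z * ((starRingEnd ℂ) a / (1 - (starRingEnd ℂ) a * z)) / ((Lam a : ℝ) : ℂ) :=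
  (tg_hasDerivAt ha hz).deriv

lemma Lam_ne {a : ℂ} (ha : a ∈ D1) : ((Lam a : ℝ) : ℂ) ≠ 0 := by
  have := Lam_pos' ha
  simp only [ne_eq, Complex.ofReal_eq_zero]
  linarith

lemma tg_self {a : ℂ} (ha : a ∈ D1) : tg a a = ((Lam a : ℝ) : ℂ) := by
  unfold tg
  rw [tf_self ha, pow_two, mul_div_assoc, div_self (Lam_ne ha), mul_one]

lemma tg_deriv_self {a : ℂ} (ha : a ∈ D1) :
    deriv (tg a) a = 2 * ((starRingEnd ℂ) a / (1 - (starRingEnd ℂ) a * a)) := by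
  rw [tg_deriv ha ha, tf_self ha]
  rw [show (2:ℂ) * ((Lam a:ℝ):ℂ) * ((starRingEnd ℂ) a / (1 - (starRingEnd ℂ) a * a)) / ((Lam a:ℝ):ℂ)
      = ((Lam a:ℝ):ℂ) / ((Lam a:ℝ):ℂ) * (2 * ((starRingEnd ℂ) a / (1 - (starRingEnd ℂ) a * a))) from by ring,
     div_self (Lam_ne ha), one_mul]

lemma tg_pointwise {a : ℂ} (ha : a ∈ D1) :
    ∀ z ∈ D1, (1 - ‖z‖ ^ 2) * ‖deriv (tg a) z‖ ≤ 44 := by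
  intro z hz
  set t := ‖1 - (starRingEnd ℂ) a * z‖ with ht
  set L := Lam a with hLdef
  have hL : Real.log 2 ≤ L := Lam_pos ha
  have hlog2 : (0.6931471803 : ℝ) < Real.log 2 := Real.log_two_gt_d9
  have hlog2' : Real.log 2 < 0.6931471808 := Real.log_two_lt_d9
  have hpi : Real.pi ≤ 4 := Real.pi_le_four
  have hL0 : 0 < L := Lam_pos' ha
  have hne := one_sub_conj_ne ha hz
  have ht0 : 0 < t := norm_pos_iff.mpr hne
  have ht1 : 1 - ‖z‖ ≤ t := norm_one_sub_conj_lb' ha hz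
  have ht2 : 1 - ‖a‖ ≤ t := norm_one_sub_conj_lb'' ha hz
  have hz1 : ‖z‖ < 1 := mem_D1.mp hz
  have hz0 : (0:ℝ) ≤ ‖z‖ := norm_nonneg z
  have ha1 : ‖a‖ < 1 := mem_D1.mp ha
  have ha0 : (0:ℝ) ≤ ‖a‖ := norm_nonneg a
  set A := ‖tf a z‖ with hA
  have hA0 : 0 ≤ A := norm_nonneg _
  -- A ≤ log 2 + L + π
  have hAle : A ≤ Real.log 2 + L + Real.pi := by
    have h1 := norm_tf_le ha hz
    have h2 : Real.log (2 / t) ≤ Real.log 2 + L := by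
      have hle : 2 / t ≤ 2 * (2 / (1 - ‖a‖ ^ 2)) := by
        have h3 : 0 < 1 - ‖a‖ ^ 2 := one_sub_sq_pos ha
        rw [div_le_iff₀ ht0]
        have h4 : (2:ℝ) * (2 / (1 - ‖a‖^2)) * (1 - ‖a‖) ≥ 2 := by
          rw [ge_iff_le, show (2:ℝ) * (2 / (1 - ‖a‖^2)) * (1 - ‖a‖) = 4 * ((1-‖a‖)/(1-‖a‖^2)) by ring]
          have h5 : (1-‖a‖)/(1-‖a‖^2) ≥ 1/2 := by
            rw [ge_iff_le, div_le_div_iff₀ (by norm_num) h3]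
            nlinarith
          linarith
        have hKpos : (0:ℝ) ≤ 2 * (2 / (1 - ‖a‖^2)) :=
          mul_nonneg (by norm_num) (le_of_lt (div_pos (by norm_num) h3))
        nlinarith [mul_le_mul_of_nonneg_left ht2 hKpos]
      calc Real.log (2 / t) ≤ Real.log (2 * (2 / (1 - ‖a‖ ^ 2))) :=
            Real.log_le_log (div_pos (by norm_num) ht0) hle
        _ = Real.log 2 + L := by
            rw [Real.log_mul (by norm_num) (ne_of_gt (div_pos (by norm_num) (one_sub_sq_pos ha)))]
            rfl
    linarith
  -- norm of deriv
  have hnd : ‖deriv (tg a) z‖ = 2 * A * (‖a‖ / t) / L := by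
    rw [tg_deriv ha hz]
    rw [norm_div, norm_mul, norm_mul, norm_div, RCLike.norm_conj]
    rw [Complex.norm_real, Real.norm_eq_abs, _root_.abs_of_pos hL0]
    norm_num [hA, ht]
  rw [hnd]
  -- main estimate
  have hw : 1 - ‖z‖ ^ 2 ≤ 2 * t := by nlinarith
  have hstep : (1 - ‖z‖ ^ 2) * (2 * A * (‖a‖ / t) / L) ≤ 2 * t * (2 * A * (1 / t) / L) := by
    have e1 : (1 - ‖z‖ ^ 2) * (2 * A * (‖a‖ / t) / L) = (2 * A * ‖a‖ / L) * ((1 - ‖z‖^2)/t) := by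
      ring
    have e2 : 2 * t * (2 * A * (1 / t) / L) = (2 * A * 1 / L) * ((2*t)/t) := by ring
    rw [e1, e2]
    apply mul_le_mul
    · apply div_le_div_of_nonneg_right ?_ hL0.le
      nlinarith
    · exact div_le_div_of_nonneg_right hw ht0.le
    · exact div_nonneg (by nlinarith) ht0.le
    · exact div_nonneg (by positivity) hL0.le
  have hfin : 2 * t * (2 * A * (1 / t) / L) = 4 * (A / L) := by
    rw [show 2 * t * (2 * A * (1 / t) / L) = 4 * (A/L) * (t * (1/t)) from by ring]
    rw [mul_one_div, div_self (ne_of_gt ht0), mul_one]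
  have hAL : A / L ≤ 11 := by
    rw [div_le_iff₀ hL0]
    nlinarith
  calc (1 - ‖z‖ ^ 2) * (2 * A * (‖a‖ / t) / L) ≤ 2 * t * (2 * A * (1 / t) / L) := hstep
    _ = 4 * (A / L) := hfin
    _ ≤ 44 := by linarith

lemma tg_inBloch {a : ℂ} (ha : a ∈ D1) : InBloch (tg a) :=
  ⟨tg_diffOn ha, 44, tg_pointwise ha⟩

lemma tg_blochNorm_le {a : ℂ} (ha : a ∈ D1) : blochNorm (tg a) ≤ 45 := by
  unfold blochNorm
  have h1 : blochSemi (tg a) ≤ 44 := blochSemi_le (tg_pointwise ha)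
  have h2 : ‖tg a 0‖ ≤ 1 := by
    unfold tg
    rw [tf_zero]
    rw [norm_div, norm_pow]
    have hlog : ‖Complex.log 2‖ = Real.log 2 := by
      rw [show (2:ℂ) = ((2:ℝ):ℂ) by norm_num, ← Complex.ofReal_log (by norm_num : (0:ℝ) ≤ 2)]
      rw [Complex.norm_real, Real.norm_eq_abs, _root_.abs_of_nonneg (Real.log_nonneg (by norm_num : (1:ℝ) ≤ 2))]
    rw [hlog, Complex.norm_real, Real.norm_eq_abs, _root_.abs_of_pos (Lam_pos' ha)]
    have hL := Lam_pos ha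
    have hL0 := Lam_pos' ha
    have hlog2' : Real.log 2 < 0.6931471808 := Real.log_two_lt_d9
    have hlog2 : (0.6931471803:ℝ) < Real.log 2 := Real.log_two_gt_d9
    rw [div_le_one hL0]
    nlinarith
  linarith
-- PART 7: series of test functions
def tfd (a : ℂ) (z : ℂ) : ℂ := (starRingEnd ℂ) a / (1 - (starRingEnd ℂ) a * z)

def ser (b c : ℕ → ℂ) (z : ℂ) : ℂ := ∑' k, c k * tf (b k) z
def serD (b c : ℕ → ℂ) (z : ℂ) : ℂ := ∑' k, c k * tfd (b k) z

lemma norm_tfd_le {a z : ℂ} (ha : a ∈ D1) (hz : z ∈ D1) :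
    ‖tfd a z‖ ≤ 1 / (1 - ‖z‖) := by
  unfold tfd
  have hz1 : ‖z‖ < 1 := mem_D1.mp hz
  have hlb := norm_one_sub_conj_lb' ha hz
  have hpos : (0:ℝ) < ‖1 - (starRingEnd ℂ) a * z‖ := norm_pos_iff.mpr (one_sub_conj_ne ha hz)
  rw [norm_div, RCLike.norm_conj]
  apply div_le_div₀ (by linarith) _ (by linarith) hlb
  calc ‖a‖ ≤ 1 := (mem_D1.mp ha).le
  
lemma norm_tf_le_rho {a z : ℂ} (ha : a ∈ D1) (hz : z ∈ D1) {ρ : ℝ} (hρ : ρ < 1)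
    (hzρ : ‖z‖ ≤ ρ) : ‖tf a z‖ ≤ Real.log (2 / (1 - ρ)) + Real.pi := by
  have h := norm_tf_le ha hz
  have hlb := norm_one_sub_conj_lb' ha hz
  have hρ0 : (0:ℝ) ≤ ρ := le_trans (norm_nonneg z) hzρ
  have h1 : 1 - ρ ≤ ‖1 - (starRingEnd ℂ) a * z‖ := by linarith
  have hpos : (0:ℝ) < 1 - ρ := by linarith
  have h2 : Real.log (2 / ‖1 - (starRingEnd ℂ) a * z‖) ≤ Real.log (2 / (1 - ρ)) := by
    apply Real.log_le_log (div_pos (by norm_num) (by linarith))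
    apply div_le_div₀ (by norm_num) (le_refl 2) (by linarith) h1
  linarith

lemma summable_geo (M : ℝ) : Summable (fun k : ℕ => 2 * (1/2:ℝ)^k * M) := by
  apply Summable.mul_right
  apply Summable.mul_left
  exact summable_geometric_of_lt_one (by norm_num) (by norm_num)

lemma compact_subset_rho {K : Set ℂ} (hK : IsCompact K) (hKD : K ⊆ D1) :
    ∃ ρ : ℝ, ρ < 1 ∧ ∀ z ∈ K, ‖z‖ ≤ ρ := by
  rcases K.eq_empty_or_nonempty with h | h
  · exact ⟨0, by norm_num, by simp [h]⟩
  · obtain ⟨z₀, hz₀K, hz₀⟩ := hK.exists_isMaxOn h (continuous_norm.continuousOn)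
    exact ⟨‖z₀‖, mem_D1.mp (hKD hz₀K), fun z hzK => hz₀ hzK⟩

section series
variable {b c : ℕ → ℂ} (hb : ∀ k, b k ∈ D1) (hc : ∀ k, ‖c k‖ ≤ 2 * (1/2)^k)

include hb hc

lemma ser_tendsto : TendstoLocallyUniformlyOn
    (fun (s : Finset ℕ) (z : ℂ) => ∑ k ∈ s, c k * tf (b k) z) (ser b c) atTop D1 := by
  rw [tendstoLocallyUniformlyOn_iff_forall_isCompact isOpen_D1]
  intro K hKD hK
  obtain ⟨ρ, hρ1, hρ⟩ := compact_subset_rho hK hKD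
  apply tendstoUniformlyOn_tsum (summable_geo (Real.log (2 / (1 - ρ)) + Real.pi))
  intro k z hzK
  rw [norm_mul]
  have hz : z ∈ D1 := hKD hzK
  have h1 := norm_tf_le_rho (hb k) hz hρ1 (hρ z hzK)
  have h2 := hc k
  have hM : 0 ≤ Real.log (2 / (1 - ρ)) + Real.pi := by
    have : (0:ℝ) ≤ ρ := le_trans (norm_nonneg _) (hρ z hzK)
    have h3 : (1:ℝ) ≤ 2 / (1-ρ) := by
      rw [le_div_iff₀ (by linarith)]; linarith
    have := Real.log_nonneg h3
    have := Real.pi_pos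
    linarith
  apply mul_le_mul h2 h1 (norm_nonneg _) (by positivity)

lemma ser_partial_diff : ∀ (s : Finset ℕ),
    DifferentiableOn ℂ (fun z => ∑ k ∈ s, c k * tf (b k) z) D1 := by
  intro s z hz
  apply DifferentiableWithinAt.fun_sum
  intro k _
  exact ((tf_diffOn (hb k)) z hz).const_mul (c k)

lemma ser_diffOn : AnalyticOnD (ser b c) :=
  (ser_tendsto hb hc).differentiableOn (Eventually.of_forall (ser_partial_diff hb hc)) isOpen_D1

lemma ser_deriv : ∀ z ∈ D1, deriv (ser b c) z = serD b c z := by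
  intro z hz
  have htlu := (ser_tendsto hb hc).deriv
    (Eventually.of_forall (ser_partial_diff hb hc)) isOpen_D1
  have h1 : Tendsto (fun s : Finset ℕ => deriv (fun w => ∑ k ∈ s, c k * tf (b k) w) z)
      atTop (nhds (deriv (ser b c) z)) := htlu.tendsto_at hz
  have h2 : ∀ s : Finset ℕ, deriv (fun w => ∑ k ∈ s, c k * tf (b k) w) z
      = ∑ k ∈ s, c k * tfd (b k) z := by
    intro s
    rw [deriv_fun_sum (fun k _ => (((tf_diffOn (hb k)) z hz).differentiableAt
      (isOpen_D1.mem_nhds hz)).const_mul (c k))]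
    apply Finset.sum_congr rfl
    intro k _
    rw [deriv_const_mul _ (((tf_diffOn (hb k)) z hz).differentiableAt (isOpen_D1.mem_nhds hz))]
    rw [tf_deriv (hb k) hz]
    rfl
  simp_rw [h2] at h1
  have hsum : Summable (fun k => c k * tfd (b k) z) := by
    apply Summable.of_norm_bounded (summable_geo (1/(1-‖z‖)))
    intro k
    rw [norm_mul]
    apply mul_le_mul (hc k) (norm_tfd_le (hb k) hz) (norm_nonneg _) (by positivity)
  have h3 : Tendsto (fun s : Finset ℕ => ∑ k ∈ s, c k * tfd (b k) z)
      atTop (nhds (serD b c z)) := hsum.hasSum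
  exact tendsto_nhds_unique h1 h3

lemma ser_pointwise : ∀ z ∈ D1, (1 - ‖z‖^2) * ‖deriv (ser b c) z‖ ≤ 8 := by
  intro z hz
  rw [ser_deriv hb hc z hz]
  have hz1 : ‖z‖ < 1 := mem_D1.mp hz
  have hz0 : (0:ℝ) ≤ ‖z‖ := norm_nonneg z
  have hsum : Summable (fun k => ‖c k * tfd (b k) z‖) := by
    apply Summable.of_nonneg_of_le (fun k => norm_nonneg _) _ (summable_geo (1/(1-‖z‖)))
    intro k
    rw [norm_mul]
    apply mul_le_mul (hc k) (norm_tfd_le (hb k) hz) (norm_nonneg _) (by positivity)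
  have h1 : ‖serD b c z‖ ≤ ∑' k, ‖c k * tfd (b k) z‖ := norm_tsum_le_tsum_norm hsum
  have h2 : (∑' k, ‖c k * tfd (b k) z‖) ≤ ∑' k : ℕ, 2 * (1/2:ℝ)^k * (1/(1-‖z‖)) := by
    apply Summable.tsum_le_tsum _ hsum (summable_geo _)
    intro k
    rw [norm_mul]
    apply mul_le_mul (hc k) (norm_tfd_le (hb k) hz) (norm_nonneg _) (by positivity)
  have h3 : (∑' k : ℕ, 2 * (1/2:ℝ)^k * (1/(1-‖z‖))) = 4 * (1/(1-‖z‖)) := by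
    rw [tsum_mul_right, tsum_mul_left, tsum_geometric_of_lt_one (by norm_num) (by norm_num)]
    norm_num
  have h4 : ‖serD b c z‖ ≤ 4 / (1 - ‖z‖) := by
    rw [h3] at h2
    calc ‖serD b c z‖ ≤ 4 * (1/(1-‖z‖)) := le_trans h1 h2
      _ = 4 / (1-‖z‖) := by ring
  calc (1 - ‖z‖^2) * ‖serD b c z‖ ≤ (2 * (1 - ‖z‖)) * (4 / (1-‖z‖)) := by
        apply mul_le_mul (by nlinarith) h4 (norm_nonneg _) (by nlinarith)
    _ = 8 := by
        rw [show (2 * (1-‖z‖)) * (4/(1-‖z‖)) = 8 * ((1-‖z‖)/(1-‖z‖)) from by ring]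
        rw [div_self (by linarith : (1:ℝ)-‖z‖ ≠ 0)]
        norm_num

lemma ser_inBloch : InBloch (ser b c) :=
  ⟨ser_diffOn hb hc, 8, ser_pointwise hb hc⟩

lemma ser_semi_le : blochSemi (ser b c) ≤ 8 := blochSemi_le (ser_pointwise hb hc)

lemma ser_re_ge (j : ℕ) {z : ℂ} (hz : z ∈ D1)
    (hpos : ∀ k, 0 ≤ (c k * tf (b k) z).re) :
    (c j * tf (b j) z).re ≤ (ser b c z).re := by
  have hsum : Summable (fun k => c k * tf (b k) z) := by
    apply Summable.of_norm_bounded (summable_geo (Real.log (2/(1-‖z‖)) + Real.pi))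
    intro k
    rw [norm_mul]
    have h1 := norm_tf_le_rho (hb k) hz (mem_D1.mp hz) (le_refl ‖z‖)
    exact mul_le_mul (hc k) h1 (norm_nonneg _) (by positivity)
  unfold ser
  rw [Complex.re_tsum hsum]
  apply Summable.le_tsum _ j (fun k _ => hpos k)
  apply Summable.of_norm_bounded hsum.norm
  intro k
  rw [Real.norm_eq_abs]
  exact Complex.abs_re_le_norm _

lemma serD_re_ge (j : ℕ) {z : ℂ} (hz : z ∈ D1)
    (hpos : ∀ k, 0 ≤ (c k * tfd (b k) z).re) :
    (c j * tfd (b j) z).re ≤ (serD b c z).re := by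
  have hsum : Summable (fun k => c k * tfd (b k) z) := by
    apply Summable.of_norm_bounded (summable_geo (1/(1-‖z‖)))
    intro k
    rw [norm_mul]
    exact mul_le_mul (hc k) (norm_tfd_le (hb k) hz) (norm_nonneg _) (by positivity)
  unfold serD
  rw [Complex.re_tsum hsum]
  apply Summable.le_tsum _ j (fun k _ => hpos k)
  apply Summable.of_norm_bounded hsum.norm
  intro k
  rw [Real.norm_eq_abs]
  exact Complex.abs_re_le_norm _

end series
-- PART 8: extraction lemmas
section extraction
variable {u φ : ℂ → ℂ} {C : ℝ}

lemma key_pointwise (hφ : AnalyticOnD φ) (hmaps : Set.MapsTo φ D1 D1) (hu : InBloch u)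
    (hC : ∀ f, InBloch f → InBloch (wco u φ f) ∧ blochNorm (wco u φ f) ≤ C * blochNorm f)
    {f : ℂ → ℂ} (hf : InBloch f) {z : ℂ} (hz : z ∈ D1) :
    (1 - ‖z‖^2) * ‖deriv u z * f (φ z) + u z * (deriv f (φ z) * deriv φ z)‖
      ≤ C * blochNorm f := by
  obtain ⟨hTB, hTle⟩ := hC f hf
  have h1 := pointwise_le_blochSemi hTB hz
  rw [deriv_wco hu.1 hφ hmaps hf.1 hz] at h1
  calc (1 - ‖z‖^2) * ‖deriv u z * f (φ z) + u z * (deriv f (φ z) * deriv φ z)‖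
      ≤ blochSemi (wco u φ f) := h1
    _ ≤ blochNorm (wco u φ f) := blochSemi_le_blochNorm _
    _ ≤ C * blochNorm f := hTle

lemma star_est (hφ : AnalyticOnD φ) (hmaps : Set.MapsTo φ D1 D1) (hu : InBloch u) (hC0 : 0 ≤ C)
    (hC : ∀ f, InBloch f → InBloch (wco u φ f) ∧ blochNorm (wco u φ f) ≤ C * blochNorm f)
    {z : ℂ} (hz : z ∈ D1) :
    (1 - ‖z‖^2) * ‖deriv u z‖ * Lam (φ z) ≤ 51 * C := by
  set a := φ z with ha
  have haD : a ∈ D1 := hmaps hz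
  have hE1 : (1 - ‖z‖^2) * ‖deriv u z * tf a a + u z * (deriv (tf a) a * deriv φ z)‖
      ≤ 3 * C := by
    have h := key_pointwise hφ hmaps hu hC (tf_inBloch haD) hz
    have h2 : C * blochNorm (tf a) ≤ C * 3 := by
      apply mul_le_mul_of_nonneg_left (tf_blochNorm_le haD) hC0
    linarith
  have hE2 : (1 - ‖z‖^2) * ‖deriv u z * tg a a + u z * (deriv (tg a) a * deriv φ z)‖
      ≤ 45 * C := by
    have h := key_pointwise hφ hmaps hu hC (tg_inBloch haD) hz
    have h2 : C * blochNorm (tg a) ≤ C * 45 := by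
      apply mul_le_mul_of_nonneg_left (tg_blochNorm_le haD) hC0
    linarith
  -- combination
  have hcomb : deriv u z * ((Lam a : ℝ) : ℂ) =
      (2:ℂ) * (deriv u z * tf a a + u z * (deriv (tf a) a * deriv φ z))
      - (deriv u z * tg a a + u z * (deriv (tg a) a * deriv φ z)) := by
    rw [tf_self haD, tg_self haD, tg_deriv_self haD, tf_deriv haD haD]
    push_cast
    ring
  have hnorm : ‖deriv u z * ((Lam a : ℝ) : ℂ)‖ = ‖deriv u z‖ * Lam a := by
    rw [norm_mul, Complex.norm_real, Real.norm_eq_abs, _root_.abs_of_pos (Lam_pos' haD)]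
  have h3 : (1 - ‖z‖^2) * ‖deriv u z * ((Lam a : ℝ) : ℂ)‖ ≤ 51 * C := by
    rw [hcomb]
    have hpos := one_sub_sq_pos hz
    calc (1 - ‖z‖^2) * ‖(2:ℂ) * (deriv u z * tf a a + u z * (deriv (tf a) a * deriv φ z))
          - (deriv u z * tg a a + u z * (deriv (tg a) a * deriv φ z))‖
        ≤ (1 - ‖z‖^2) * (2 * ‖deriv u z * tf a a + u z * (deriv (tf a) a * deriv φ z)‖
          + ‖deriv u z * tg a a + u z * (deriv (tg a) a * deriv φ z)‖) := by
          apply mul_le_mul_of_nonneg_left _ hpos.le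
          calc ‖(2:ℂ) * (deriv u z * tf a a + u z * (deriv (tf a) a * deriv φ z))
                - (deriv u z * tg a a + u z * (deriv (tg a) a * deriv φ z))‖
              ≤ ‖(2:ℂ) * (deriv u z * tf a a + u z * (deriv (tf a) a * deriv φ z))‖
                + ‖deriv u z * tg a a + u z * (deriv (tg a) a * deriv φ z)‖ := norm_sub_le _ _
            _ = 2 * ‖deriv u z * tf a a + u z * (deriv (tf a) a * deriv φ z)‖
                + ‖deriv u z * tg a a + u z * (deriv (tg a) a * deriv φ z)‖ := by
                rw [norm_mul]
                norm_num
      _ = 2 * ((1 - ‖z‖^2) * ‖deriv u z * tf a a + u z * (deriv (tf a) a * deriv φ z)‖)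
          + (1 - ‖z‖^2) * ‖deriv u z * tg a a + u z * (deriv (tg a) a * deriv φ z)‖ := by ring
      _ ≤ 2 * (3 * C) + 45 * C := by
          have := mul_le_mul_of_nonneg_left hE1 (by norm_num : (0:ℝ) ≤ 2)
          linarith
      _ = 51 * C := by ring
  rw [hnorm] at h3
  linarith [h3, mul_assoc (1 - ‖z‖^2) ‖deriv u z‖ (Lam a)]

lemma starstar_est (hφ : AnalyticOnD φ) (hmaps : Set.MapsTo φ D1 D1) (hu : InBloch u)
    (hC : ∀ f, InBloch f → InBloch (wco u φ f) ∧ blochNorm (wco u φ f) ≤ C * blochNorm f)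
    {z : ℂ} (hz : z ∈ D1) :
    (1 - ‖z‖^2) * (‖u z‖ * ‖deriv φ z‖) ≤ C + blochSemi u := by
  have h := key_pointwise hφ hmaps hu hC inBloch_id hz
  rw [blochNorm_id, mul_one] at h
  rw [deriv_id''] at h
  simp only [one_mul] at h
  -- h : (1-‖z‖²)‖u' z * φ z + u z * deriv φ z‖ ≤ C
  have h2 : ‖u z * deriv φ z‖ ≤ ‖deriv u z * φ z + u z * deriv φ z‖ + ‖deriv u z * φ z‖ := by
    calc ‖u z * deriv φ z‖ = ‖(deriv u z * φ z + u z * deriv φ z) - deriv u z * φ z‖ := by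
          ring_nf
      _ ≤ ‖deriv u z * φ z + u z * deriv φ z‖ + ‖deriv u z * φ z‖ := norm_sub_le _ _
  have h3 : (1-‖z‖^2) * ‖deriv u z * φ z‖ ≤ blochSemi u := by
    rw [norm_mul]
    calc (1-‖z‖^2) * (‖deriv u z‖ * ‖φ z‖) ≤ (1-‖z‖^2) * (‖deriv u z‖ * 1) := by
          apply mul_le_mul_of_nonneg_left _ (one_sub_sq_pos hz).le
          apply mul_le_mul_of_nonneg_left (mem_D1.mp (hmaps hz)).le (norm_nonneg _)
      _ = (1-‖z‖^2) * ‖deriv u z‖ := by ring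
      _ ≤ blochSemi u := pointwise_le_blochSemi hu hz
  have hpos := one_sub_sq_pos hz
  have h4 := mul_le_mul_of_nonneg_left h2 hpos.le
  rw [← norm_mul]
  calc (1-‖z‖^2) * ‖u z * deriv φ z‖
      ≤ (1-‖z‖^2) * ‖deriv u z * φ z + u z * deriv φ z‖ + (1-‖z‖^2) * ‖deriv u z * φ z‖ := by
        nlinarith [h2]
    _ ≤ C + blochSemi u := by linarith

end extraction
-- PART 9: forward direction (1)
lemma re_one_div_nonneg {w : ℂ} (hw : ‖w‖ < 1) : 0 ≤ (1 / (1 - w)).re := by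
  have hne : (1:ℂ) - w ≠ 0 := by
    intro h
    have : w = 1 := by linear_combination -h
    rw [this] at hw; norm_num at hw
  rw [one_div, Complex.inv_re]
  apply div_nonneg _ (Complex.normSq_nonneg _)
  have h1 : w.re ≤ ‖w‖ := Complex.re_le_norm w
  simp only [Complex.sub_re, Complex.one_re]
  linarith

lemma norm_conj_mul_lt {x y : ℂ} (hx : x ∈ D1) (hy : y ∈ D1) :
    ‖(starRingEnd ℂ) x * y‖ < 1 := by
  rw [norm_mul, RCLike.norm_conj]
  have h1 : ‖x‖ < 1 := mem_D1.mp hx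
  have h2 : ‖y‖ < 1 := mem_D1.mp hy
  nlinarith [norm_nonneg x, norm_nonneg y]

lemma forward_r {φ : ℂ → ℂ} (hφ : AnalyticOnD φ) (hmaps : Set.MapsTo φ D1 D1)
    (H : ∀ u, InBloch u → BddOnBloch (wco u φ)) :
    ∃ r : ℝ, r < 1 ∧ ∀ z ∈ D1, ‖φ z‖ ≤ r := by
  by_contra hcon
  push_neg at hcon
  -- max of ‖φ‖ on closedBall 0 (1/2)
  have hsub : Metric.closedBall (0:ℂ) (1/2) ⊆ D1 := by
    apply Metric.closedBall_subset_ball; norm_num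
  have hcomp : IsCompact (Metric.closedBall (0:ℂ) (1/2)) := isCompact_closedBall _ _
  have hcont : ContinuousOn (fun z => ‖φ z‖) (Metric.closedBall (0:ℂ) (1/2)) :=
    (hφ.continuousOn.mono hsub).norm
  obtain ⟨z₀, hz₀m, hz₀⟩ := hcomp.exists_isMaxOn ⟨0, by simp⟩ hcont
  set ρ := ‖φ z₀‖ with hρdef
  have hρ1 : ρ < 1 := mem_D1.mp (hmaps (hsub hz₀m))
  -- choose the sequence
  have hex : ∀ j : ℕ, ∃ z, z ∈ D1 ∧ (max ρ (1 - Real.exp (-(4^j : ℝ)))) < ‖φ z‖ := by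
    intro j
    have hr1 : max ρ (1 - Real.exp (-(4^j:ℝ))) < 1 := by
      apply max_lt hρ1
      have := Real.exp_pos (-(4^j:ℝ)); linarith
    obtain ⟨z, hzD, hz⟩ := hcon _ hr1
    exact ⟨z, hzD, hz⟩
  choose b hbD hbφ using hex
  have hbhalf : ∀ j, (1/2 : ℝ) < ‖b j‖ := by
    intro j
    by_contra h
    push_neg at h
    have hmem : b j ∈ Metric.closedBall (0:ℂ) (1/2) := by
      simpa [Metric.mem_closedBall, dist_zero_right] using h
    have h1 : ‖φ (b j)‖ ≤ ρ := hz₀ hmem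
    have h2 := hbφ j
    have h3 : ρ ≤ max ρ (1 - Real.exp (-(4^j:ℝ))) := le_max_left _ _
    linarith
  have hbne : ∀ j, b j ≠ 0 := by
    intro j h
    have := hbhalf j
    rw [h] at this
    norm_num at this
  have hLam : ∀ j, (4:ℝ)^j ≤ Lam (φ (b j)) := by
    intro j
    set w := φ (b j) with hw
    have hwD : w ∈ D1 := hmaps (hbD j)
    have hw1 : ‖w‖ < 1 := mem_D1.mp hwD
    have hw0 : (0:ℝ) ≤ ‖w‖ := norm_nonneg w
    set ε := Real.exp (-(4^j:ℝ)) with hεdef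
    have hε0 : 0 < ε := Real.exp_pos _
    have hn : 1 - ε < ‖w‖ := lt_of_le_of_lt (le_max_right _ _) (hbφ j)
    have hub : 1 - ‖w‖^2 ≤ 2 * ε := by nlinarith
    have hpos : 0 < 1 - ‖w‖^2 := one_sub_sq_pos hwD
    have h5 : ε⁻¹ ≤ 2/(1-‖w‖^2) := by
      have h6 : (2:ℝ)/(2*ε) ≤ 2/(1-‖w‖^2) :=
        div_le_div_of_nonneg_left (by norm_num) hpos hub
      have h7 : (2:ℝ)/(2*ε) = ε⁻¹ := by
        field_simp
      linarith
    calc (4:ℝ)^j = Real.log (Real.exp ((4:ℝ)^j)) := (Real.log_exp _).symm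
      _ = Real.log (ε⁻¹) := by
          rw [hεdef, ← Real.exp_neg]
          norm_num
      _ ≤ Real.log (2/(1-‖w‖^2)) := Real.log_le_log (by positivity) h5
      _ = Lam w := rfl
  -- the series
  set c : ℕ → ℂ := fun k => ((2:ℂ)⁻¹)^k * ((starRingEnd ℂ) (b k))⁻¹ with hcdef
  have hcnorm : ∀ k, ‖c k‖ ≤ 2 * (1/2:ℝ)^k := by
    intro k
    rw [hcdef]
    simp only [norm_mul, norm_pow, norm_inv, RCLike.norm_conj]
    have h1 : ‖(2:ℂ)‖ = 2 := by norm_num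
    rw [h1]
    have h2 : ‖b k‖⁻¹ ≤ 2 := by
      rw [inv_le_comm₀ (lt_trans (by norm_num) (hbhalf k)) (by norm_num)]
      linarith [hbhalf k]
    calc ((2:ℝ)⁻¹)^k * ‖b k‖⁻¹ ≤ ((2:ℝ)⁻¹)^k * 2 := by
          apply mul_le_mul_of_nonneg_left h2 (by positivity)
      _ = 2 * (1/2:ℝ)^k := by norm_num; ring
  have hu : InBloch (ser b c) := ser_inBloch hbD hcnorm
  obtain ⟨C, hC⟩ := H (ser b c) hu
  set C' := max C 0 with hC'def
  have hC'0 : 0 ≤ C' := le_max_right _ _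
  have hC' : ∀ f, InBloch f → InBloch (wco (ser b c) φ f) ∧
      blochNorm (wco (ser b c) φ f) ≤ C' * blochNorm f := by
    intro f hf
    refine ⟨(hC f hf).1, le_trans (hC f hf).2 ?_⟩
    apply mul_le_mul_of_nonneg_right (le_max_left _ _) (blochNorm_nonneg f)
  have key : ∀ j : ℕ, (2:ℝ)^j ≤ 51 * C' := by
    intro j
    have hzD := hbD j
    have h1 := star_est hφ hmaps hu hC'0 hC' hzD
    rw [ser_deriv hbD hcnorm _ hzD] at h1
    -- term values
    have hterm : ∀ k, c k * tfd (b k) (b j) =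
        (((1/2:ℝ)^k : ℝ) : ℂ) * (1/(1 - (starRingEnd ℂ) (b k) * (b j))) := by
      intro k
      rw [hcdef]
      unfold tfd
      have hk : (starRingEnd ℂ) (b k) ≠ 0 := by
        simp only [ne_eq, map_eq_zero]
        exact hbne k
      have hd : 1 - (starRingEnd ℂ) (b k) * (b j) ≠ 0 := one_sub_conj_ne (hbD k) hzD
      push_cast
      field_simp
    have hpos : ∀ k, 0 ≤ (c k * tfd (b k) (b j)).re := by
      intro k
      rw [hterm k]
      rw [Complex.re_ofReal_mul]
      apply mul_nonneg (by positivity)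
      exact re_one_div_nonneg (norm_conj_mul_lt (hbD k) hzD)
    have hre := serD_re_ge hbD hcnorm j hzD hpos
    have hjval : (c j * tfd (b j) (b j)).re = (1/2:ℝ)^j / (1-‖b j‖^2) := by
      rw [hterm j, conj_mul_self]
      have h2 : (1:ℂ) - ((‖b j‖^2 : ℝ):ℂ) = (((1-‖b j‖^2 : ℝ)):ℂ) := by push_cast; ring
      rw [h2]
      rw [show (1:ℂ)/(((1-‖b j‖^2 : ℝ)):ℂ) = (((1/(1-‖b j‖^2) : ℝ)):ℂ) by push_cast; ring]
      rw [← Complex.ofReal_mul, Complex.ofReal_re]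
      ring
    have hpos2 := one_sub_sq_pos hzD
    have hre2 : (1/2:ℝ)^j / (1-‖b j‖^2) ≤ ‖serD b c (b j)‖ := by
      rw [← hjval]
      calc (c j * tfd (b j) (b j)).re ≤ (serD b c (b j)).re := hre
        _ ≤ ‖serD b c (b j)‖ := Complex.re_le_norm _
    -- assemble
    have hΛ := hLam j
    have hA0 : (0:ℝ) ≤ (1/2:ℝ)^j / (1-‖b j‖^2) := by
      apply div_nonneg (by positivity) hpos2.le
    have h6 : (1/2:ℝ)^j / (1-‖b j‖^2) * (4:ℝ)^j ≤ ‖serD b c (b j)‖ * Lam (φ (b j)) :=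
      mul_le_mul hre2 hΛ (by positivity) (norm_nonneg _)
    have h7 := mul_le_mul_of_nonneg_left h6 hpos2.le
    have h8 : (1 - ‖b j‖^2) * ((1/2:ℝ)^j / (1-‖b j‖^2) * (4:ℝ)^j) = (2:ℝ)^j := by
      rw [show (1 - ‖b j‖^2) * ((1/2:ℝ)^j / (1-‖b j‖^2) * (4:ℝ)^j)
          = ((1-‖b j‖^2)/(1-‖b j‖^2)) * ((1/2:ℝ)^j * (4:ℝ)^j) from by ring]
      rw [div_self (ne_of_gt hpos2), one_mul, ← mul_pow]
      norm_num
    rw [h8] at h7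
    calc (2:ℝ)^j ≤ (1 - ‖b j‖^2) * (‖serD b c (b j)‖ * Lam (φ (b j))) := h7
      _ = (1 - ‖b j‖^2) * ‖serD b c (b j)‖ * Lam (φ (b j)) := by ring
      _ ≤ 51 * C' := h1
  obtain ⟨j, hj⟩ := pow_unbounded_of_one_lt (51 * C') (one_lt_two)
  exact absurd (key j) (not_le.mpr hj)
-- PART 10: forward direction (2)
lemma blochSemi_const (c : ℂ) : blochSemi (fun _ : ℂ => c) = 0 := by
  apply le_antisymm
  · apply blochSemi_le; intro z hz; simp [deriv_const]
  · exact blochSemi_nonneg _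

lemma tf_re_nonneg {a z : ℂ} (ha : a ∈ D1) (hz : z ∈ D1) : 0 ≤ (tf a z).re := by
  unfold tf
  rw [Complex.log_re]
  apply Real.log_nonneg
  have hub := norm_one_sub_conj_ub ha hz
  have hpos : (0:ℝ) < ‖1 - (starRingEnd ℂ) a * z‖ :=
    norm_pos_iff.mpr (one_sub_conj_ne ha hz)
  have h1 : ‖(2:ℂ) / (1 - (starRingEnd ℂ) a * z)‖ = 2 / ‖1 - (starRingEnd ℂ) a * z‖ := by
    rw [norm_div]
    norm_num
  rw [h1, le_div_iff₀ hpos]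
  linarith

lemma forward_mult {φ : ℂ → ℂ} (hφ : AnalyticOnD φ) (hmaps : Set.MapsTo φ D1 D1)
    (H : ∀ u, InBloch u → BddOnBloch (wco u φ)) :
    BddOnBloch (mult φ) := by
  -- C₁ : uniform bound on (1-|z|²)|φ'|
  obtain ⟨C₀, hC₀⟩ := H (fun _ => 1) (inBloch_const 1)
  set C₁ := max C₀ 0 with hC₁def
  have hC₁0 : 0 ≤ C₁ := le_max_right _ _
  have hC₀' : ∀ f, InBloch f → InBloch (wco (fun _ => 1) φ f) ∧
      blochNorm (wco (fun _ => 1) φ f) ≤ C₁ * blochNorm f := by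
    intro f hf
    exact ⟨(hC₀ f hf).1, le_trans (hC₀ f hf).2
      (mul_le_mul_of_nonneg_right (le_max_left _ _) (blochNorm_nonneg f))⟩
  have hC1 : ∀ z ∈ D1, (1 - ‖z‖^2) * ‖deriv φ z‖ ≤ C₁ := by
    intro z hz
    have h := starstar_est hφ hmaps (inBloch_const 1) hC₀' hz
    rw [blochSemi_const] at h
    simpa using h
  -- the logarithmic condition
  have hL : ∃ L, ∀ z ∈ D1, (1 - ‖z‖^2) * ‖deriv φ z‖ * (1 - Real.log (1-‖z‖)) ≤ L := by
    by_contra hcon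
    push_neg at hcon
    choose b hbD hbL using fun j : ℕ => hcon ((2:ℝ)^j * (j + C₁))
    set c : ℕ → ℂ := fun k => ((2:ℂ)⁻¹)^k with hcdef
    have hcnorm : ∀ k, ‖c k‖ ≤ 2 * (1/2:ℝ)^k := by
      intro k
      rw [hcdef]
      simp only [norm_pow, norm_inv]
      have h1 : ‖(2:ℂ)‖ = 2 := by norm_num
      rw [h1]
      have : ((2:ℝ)⁻¹)^k = (1/2:ℝ)^k := by norm_num
      rw [this]
      nlinarith [pow_nonneg (by norm_num : (0:ℝ) ≤ 1/2) k]
    have hu : InBloch (ser b c) := ser_inBloch hbD hcnorm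
    obtain ⟨C, hC⟩ := H (ser b c) hu
    set C' := max C 0 with hC'def
    have hC'0 : 0 ≤ C' := le_max_right _ _
    have hC' : ∀ f, InBloch f → InBloch (wco (ser b c) φ f) ∧
        blochNorm (wco (ser b c) φ f) ≤ C' * blochNorm f := by
      intro f hf
      exact ⟨(hC f hf).1, le_trans (hC f hf).2
        (mul_le_mul_of_nonneg_right (le_max_left _ _) (blochNorm_nonneg f))⟩
    set K := C' + 8 with hKdef
    have key : ∀ j : ℕ, (j:ℝ) ≤ K := by
      intro j
      have hzD := hbD j
      have h1 := starstar_est hφ hmaps hu hC' hzD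
      have h2 : (1 - ‖b j‖^2) * (‖ser b c (b j)‖ * ‖deriv φ (b j)‖) ≤ K := by
        have := ser_semi_le hbD hcnorm
        calc (1 - ‖b j‖^2) * (‖ser b c (b j)‖ * ‖deriv φ (b j)‖)
            ≤ C' + blochSemi (ser b c) := h1
          _ ≤ K := by rw [hKdef]; linarith
      -- lower bound for ‖ser b c (b j)‖
      have hterm : ∀ k, c k * tf (b k) (b j) = (((1/2:ℝ)^k : ℝ) : ℂ) * tf (b k) (b j) := by
        intro k
        rw [hcdef]
        push_cast
        norm_num
      have hpos : ∀ k, 0 ≤ (c k * tf (b k) (b j)).re := by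
        intro k
        rw [hterm k, Complex.re_ofReal_mul]
        exact mul_nonneg (by positivity) (tf_re_nonneg (hbD k) hzD)
      have hre := ser_re_ge hbD hcnorm j hzD hpos
      have hjval : (c j * tf (b j) (b j)).re = (1/2:ℝ)^j * Lam (b j) := by
        rw [hterm j, tf_self hzD, ← Complex.ofReal_mul, Complex.ofReal_re]
      have hlow : (1/2:ℝ)^j * Lam (b j) ≤ ‖ser b c (b j)‖ := by
        rw [← hjval]
        exact le_trans hre (Complex.re_le_norm _)
      -- assemble
      set s := ‖b j‖ with hsdef
      set P := (1 - s^2) * ‖deriv φ (b j)‖ with hPdef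
      have hP0 : 0 ≤ P := by
        rw [hPdef]
        exact mul_nonneg (one_sub_sq_pos hzD).le (norm_nonneg _)
      have hPC : P ≤ C₁ := hC1 _ hzD
      have hW : -Real.log (1 - s) ≤ Lam (b j) := Lam_ge_neg_log hzD
      have hW0 : 0 ≤ -Real.log (1 - s) := log_nonneg_aux (norm_nonneg _) (mem_D1.mp hzD)
      have hbig : (2:ℝ)^j * (j + C₁) < P * (1 - Real.log (1 - s)) := by
        have := hbL j
        calc (2:ℝ)^j * (j + C₁) < (1 - s^2) * ‖deriv φ (b j)‖ * (1 - Real.log (1-s)) := this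
          _ = P * (1 - Real.log (1-s)) := by rw [hPdef]
      have hchain : P * ((1/2:ℝ)^j * Lam (b j)) ≤ K := by
        calc P * ((1/2:ℝ)^j * Lam (b j)) ≤ P * ‖ser b c (b j)‖ := by
              apply mul_le_mul_of_nonneg_left hlow hP0
          _ = (1 - s^2) * (‖ser b c (b j)‖ * ‖deriv φ (b j)‖) := by rw [hPdef]; ring
          _ ≤ K := h2
      have hhalfpow : (1/2:ℝ)^j * (2:ℝ)^j = 1 := by
        rw [← mul_pow]; norm_num
      have hp2 : (0:ℝ) < (1/2:ℝ)^j := by positivity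
      have hp3 : (1/2:ℝ)^j ≤ 1 := by
        apply pow_le_one₀ (by norm_num) (by norm_num)
      -- P * ((1/2)^j * Λ) ≥ (1/2)^j * (P*(1+W) - P) ≥ (1/2)^j*(2^j(j+C₁) - C₁)
      have hfin : (j:ℝ) ≤ P * ((1/2:ℝ)^j * Lam (b j)) := by
        have e1 : P * Lam (b j) ≥ P * (-Real.log (1-s)) := by
          apply mul_le_mul_of_nonneg_left hW hP0
        have e2 : P * (1 - Real.log (1-s)) - P ≤ P * (-Real.log (1-s)) := by nlinarith
        have e3 : (2:ℝ)^j * (j + C₁) - C₁ ≤ P * Lam (b j) := by nlinarith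
        have e4 := mul_le_mul_of_nonneg_left e3 hp2.le
        calc (j:ℝ) = (1/2:ℝ)^j * ((2:ℝ)^j * (j + C₁)) - (j:ℝ) * 0 - C₁ := by
              rw [show (1/2:ℝ)^j * ((2:ℝ)^j * (j+C₁)) = ((1/2:ℝ)^j * (2:ℝ)^j) * (j+C₁) from by ring,
                hhalfpow]
              ring
          _ ≤ (1/2:ℝ)^j * (P * Lam (b j)) := by
              have h5 : (1/2:ℝ)^j * C₁ ≤ C₁ := by nlinarith
              nlinarith [e4]
          _ = P * ((1/2:ℝ)^j * Lam (b j)) := by ring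
      linarith
    obtain ⟨n, hn⟩ := exists_nat_gt K
    exact absurd (key n) (not_le.mpr hn)
  -- construct the bound
  obtain ⟨L, hLle⟩ := hL
  set L' := max L 0 with hL'def
  have hL'0 : 0 ≤ L' := le_max_right _ _
  have hLle' : ∀ z ∈ D1, (1 - ‖z‖^2) * ‖deriv φ z‖ * (1 - Real.log (1-‖z‖)) ≤ L' :=
    fun z hz => le_trans (hLle z hz) (le_max_left _ _)
  refine ⟨L' + 2, ?_⟩
  intro f hf
  have hpw : ∀ z ∈ D1, (1 - ‖z‖^2) * ‖deriv (mult φ f) z‖ ≤ (L' + 1) * blochNorm f := by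
    intro z hz
    rw [deriv_mult hφ hf.1 hz]
    have hpos := one_sub_sq_pos hz
    have hG1 : (1:ℝ) ≤ 1 - Real.log (1-‖z‖) := by
      have := log_nonneg_aux (norm_nonneg z) (mem_D1.mp hz)
      linarith
    have h1 : (1 - ‖z‖^2) * ‖deriv φ z * f z‖ ≤ L' * blochNorm f := by
      rw [norm_mul]
      have hfz := growth hf hz
      have hphi := hLle' z hz
      have hP0 : 0 ≤ (1 - ‖z‖^2) * ‖deriv φ z‖ := mul_nonneg hpos.le (norm_nonneg _)
      calc (1 - ‖z‖^2) * (‖deriv φ z‖ * ‖f z‖)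
          = ((1 - ‖z‖^2) * ‖deriv φ z‖) * ‖f z‖ := by ring
        _ ≤ ((1 - ‖z‖^2) * ‖deriv φ z‖) * (blochNorm f * (1 - Real.log (1-‖z‖))) := by
            apply mul_le_mul_of_nonneg_left hfz hP0
        _ = ((1 - ‖z‖^2) * ‖deriv φ z‖ * (1 - Real.log (1-‖z‖))) * blochNorm f := by ring
        _ ≤ L' * blochNorm f := by
            apply mul_le_mul_of_nonneg_right hphi (blochNorm_nonneg f)
    have h2 : (1 - ‖z‖^2) * ‖φ z * deriv f z‖ ≤ blochNorm f := by
      rw [norm_mul]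
      calc (1 - ‖z‖^2) * (‖φ z‖ * ‖deriv f z‖)
          ≤ (1 - ‖z‖^2) * (1 * ‖deriv f z‖) := by
            apply mul_le_mul_of_nonneg_left _ hpos.le
            apply mul_le_mul_of_nonneg_right (mem_D1.mp (hmaps hz)).le (norm_nonneg _)
        _ = (1 - ‖z‖^2) * ‖deriv f z‖ := by ring
        _ ≤ blochSemi f := pointwise_le_blochSemi hf hz
        _ ≤ blochNorm f := blochSemi_le_blochNorm f
    calc (1 - ‖z‖^2) * ‖deriv φ z * f z + φ z * deriv f z‖
        ≤ (1 - ‖z‖^2) * (‖deriv φ z * f z‖ + ‖φ z * deriv f z‖) := by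
          apply mul_le_mul_of_nonneg_left (norm_add_le _ _) hpos.le
      _ = (1 - ‖z‖^2) * ‖deriv φ z * f z‖ + (1 - ‖z‖^2) * ‖φ z * deriv f z‖ := by ring
      _ ≤ L' * blochNorm f + blochNorm f := by linarith
      _ = (L' + 1) * blochNorm f := by ring
  have hdiff : AnalyticOnD (mult φ f) := mult_diffOn hφ hf.1
  constructor
  · exact ⟨hdiff, (L' + 1) * blochNorm f, hpw⟩
  · unfold blochNorm
    have h1 : blochSemi (mult φ f) ≤ (L' + 1) * blochNorm f := blochSemi_le hpw
    have h2 : ‖(mult φ f) 0‖ ≤ blochNorm f := by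
      unfold mult
      rw [norm_mul]
      have h3 : ‖φ 0‖ ≤ 1 := (mem_D1.mp (hmaps zero_mem_D1)).le
      calc ‖φ 0‖ * ‖f 0‖ ≤ 1 * ‖f 0‖ :=
            mul_le_mul_of_nonneg_right h3 (norm_nonneg _)
        _ = ‖f 0‖ := one_mul _
        _ ≤ blochNorm f := by
            unfold blochNorm
            linarith [blochSemi_nonneg f]
    have := blochNorm_nonneg f
    calc ‖(mult φ f) 0‖ + blochSemi (mult φ f) ≤ blochNorm f + (L'+1) * blochNorm f := by
          linarith
      _ = (L' + 2) * blochNorm f := by ring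
-- PART 11: reverse direction
lemma reverse_dir {φ : ℂ → ℂ} (hφ : AnalyticOnD φ) (hmaps : Set.MapsTo φ D1 D1)
    {r : ℝ} (hr1 : r < 1) (hφr : ∀ z ∈ D1, ‖φ z‖ ≤ r) (hM : BddOnBloch (mult φ))
    (u : ℂ → ℂ) (hu : InBloch u) : BddOnBloch (wco u φ) := by
  set r' := max r 0 with hr'def
  have hr'1 : r' < 1 := max_lt hr1 one_pos
  have hr'0 : 0 ≤ r' := le_max_right _ _
  have hφr' : ∀ z ∈ D1, ‖φ z‖ ≤ r' := fun z hz => le_trans (hφr z hz) (le_max_left _ _)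
  obtain ⟨Cφ, hCφ⟩ := hM
  set Cφ' := max Cφ 0 with hCφ'def
  have hCφ'0 : 0 ≤ Cφ' := le_max_right _ _
  have hCφ' : ∀ f, InBloch f → InBloch (mult φ f) ∧ blochNorm (mult φ f) ≤ Cφ' * blochNorm f := by
    intro f hf
    exact ⟨(hCφ f hf).1, le_trans (hCφ f hf).2
      (mul_le_mul_of_nonneg_right (le_max_left _ _) (blochNorm_nonneg f))⟩
  set A := Cφ' * blochNorm u + blochSemi u with hAdef
  have hA0 : 0 ≤ A := by
    rw [hAdef]
    have := blochSemi_nonneg u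
    have := blochNorm_nonneg u
    positivity
  have hA : ∀ z ∈ D1, (1 - ‖z‖^2) * (‖u z‖ * ‖deriv φ z‖) ≤ A := by
    intro z hz
    have hm := hCφ' u hu
    have h1 := pointwise_le_blochSemi hm.1 hz
    rw [deriv_mult hφ hu.1 hz] at h1
    have hpos := one_sub_sq_pos hz
    have h2 : ‖φ z * deriv u z‖ ≤ 1 * ‖deriv u z‖ := by
      rw [norm_mul]
      apply mul_le_mul_of_nonneg_right (mem_D1.mp (hmaps hz)).le (norm_nonneg _)
    have h3 : ‖deriv φ z * u z‖
        ≤ ‖deriv φ z * u z + φ z * deriv u z‖ + ‖φ z * deriv u z‖ := by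
      calc ‖deriv φ z * u z‖
          = ‖(deriv φ z * u z + φ z * deriv u z) - φ z * deriv u z‖ := by ring_nf
        _ ≤ ‖deriv φ z * u z + φ z * deriv u z‖ + ‖φ z * deriv u z‖ := norm_sub_le _ _
    have h4 : (1 - ‖z‖^2) * ‖deriv u z‖ ≤ blochSemi u := pointwise_le_blochSemi hu hz
    have h5 : blochSemi (mult φ u) ≤ Cφ' * blochNorm u :=
      le_trans (blochSemi_le_blochNorm _) hm.2
    rw [hAdef]
    have e : (1 - ‖z‖^2) * (‖u z‖ * ‖deriv φ z‖) = (1 - ‖z‖^2) * ‖deriv φ z * u z‖ := by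
      rw [norm_mul]; ring
    rw [e]
    calc (1 - ‖z‖^2) * ‖deriv φ z * u z‖
        ≤ (1 - ‖z‖^2) * ‖deriv φ z * u z + φ z * deriv u z‖
          + (1 - ‖z‖^2) * ‖φ z * deriv u z‖ := by nlinarith [h3]
      _ ≤ blochSemi (mult φ u) + (1 - ‖z‖^2) * ‖deriv u z‖ := by
          have h6 : (1 - ‖z‖^2) * ‖φ z * deriv u z‖ ≤ (1 - ‖z‖^2) * ‖deriv u z‖ := by
            nlinarith [h2]
          linarith [h1, h6]
      _ ≤ Cφ' * blochNorm u + blochSemi u := by linarith [h4, h5]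
  set Gr := 1 - Real.log (1 - r') with hGrdef
  have hGr1 : (1:ℝ) ≤ Gr := by
    rw [hGrdef]
    have := log_nonneg_aux hr'0 hr'1
    linarith
  have hGr0 : 0 ≤ Gr := by linarith
  have hden : (0:ℝ) < 1 - r'^2 := by nlinarith
  set Ctot := ‖u 0‖ * Gr + blochSemi u * Gr + A / (1 - r'^2) with hCtotdef
  refine ⟨Ctot, fun f hf => ?_⟩
  have hsemi_u := blochSemi_nonneg u
  have hbn_f := blochNorm_nonneg f
  -- pointwise bound for the derivative
  have hpw : ∀ z ∈ D1, (1 - ‖z‖^2) * ‖deriv (wco u φ f) z‖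
      ≤ (blochSemi u * Gr + A / (1 - r'^2)) * blochNorm f := by
    intro z hz
    rw [deriv_wco hu.1 hφ hmaps hf.1 hz]
    have hpos := one_sub_sq_pos hz
    have hφz : φ z ∈ D1 := hmaps hz
    have hfφ : ‖f (φ z)‖ ≤ blochNorm f * Gr := by
      rw [hGrdef]
      exact growth_le_r hf hφz (hφr' z hz) hr'1
    have hder_f : ‖deriv f (φ z)‖ ≤ blochSemi f / (1 - r'^2) := by
      have h1 := pointwise_le_blochSemi hf hφz
      have h2 : 1 - r'^2 ≤ 1 - ‖φ z‖^2 := by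
        have := hφr' z hz
        have := norm_nonneg (φ z)
        nlinarith
      rw [le_div_iff₀ hden]
      calc ‖deriv f (φ z)‖ * (1 - r'^2) ≤ ‖deriv f (φ z)‖ * (1 - ‖φ z‖^2) := by
            apply mul_le_mul_of_nonneg_left h2 (norm_nonneg _)
        _ = (1 - ‖φ z‖^2) * ‖deriv f (φ z)‖ := by ring
        _ ≤ blochSemi f := h1
    have ht1 : (1 - ‖z‖^2) * ‖deriv u z * f (φ z)‖ ≤ blochSemi u * (blochNorm f * Gr) := by
      rw [norm_mul]
      calc (1 - ‖z‖^2) * (‖deriv u z‖ * ‖f (φ z)‖)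
          = ((1 - ‖z‖^2) * ‖deriv u z‖) * ‖f (φ z)‖ := by ring
        _ ≤ blochSemi u * (blochNorm f * Gr) := by
            apply mul_le_mul (pointwise_le_blochSemi hu hz) hfφ (norm_nonneg _) hsemi_u
    have ht2 : (1 - ‖z‖^2) * ‖u z * (deriv f (φ z) * deriv φ z)‖
        ≤ A * (blochSemi f / (1 - r'^2)) := by
      rw [norm_mul, norm_mul]
      have e : (1 - ‖z‖^2) * (‖u z‖ * (‖deriv f (φ z)‖ * ‖deriv φ z‖))
          = ((1 - ‖z‖^2) * (‖u z‖ * ‖deriv φ z‖)) * ‖deriv f (φ z)‖ := by ring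
      rw [e]
      apply mul_le_mul (hA z hz) hder_f (norm_nonneg _) hA0
    calc (1 - ‖z‖^2) * ‖deriv u z * f (φ z) + u z * (deriv f (φ z) * deriv φ z)‖
        ≤ (1 - ‖z‖^2) * ‖deriv u z * f (φ z)‖
          + (1 - ‖z‖^2) * ‖u z * (deriv f (φ z) * deriv φ z)‖ := by
          have := norm_add_le (deriv u z * f (φ z)) (u z * (deriv f (φ z) * deriv φ z))
          nlinarith
      _ ≤ blochSemi u * (blochNorm f * Gr) + A * (blochSemi f / (1 - r'^2)) :=
          add_le_add ht1 ht2
      _ ≤ (blochSemi u * Gr + A / (1 - r'^2)) * blochNorm f := by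
          have h7 : blochSemi f ≤ blochNorm f := blochSemi_le_blochNorm f
          have h8 : A * (blochSemi f / (1 - r'^2)) ≤ (A / (1 - r'^2)) * blochNorm f := by
            rw [show A * (blochSemi f / (1 - r'^2)) = (A / (1-r'^2)) * blochSemi f from by ring]
            apply mul_le_mul_of_nonneg_left h7 (by positivity)
          nlinarith [h8]
  constructor
  · exact ⟨wco_diffOn hu.1 hφ hmaps hf.1, (blochSemi u * Gr + A / (1 - r'^2)) * blochNorm f, hpw⟩
  · unfold blochNorm
    have h1 : blochSemi (wco u φ f) ≤ (blochSemi u * Gr + A / (1 - r'^2)) * blochNorm f :=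
      blochSemi_le hpw
    have h2 : ‖(wco u φ f) 0‖ ≤ ‖u 0‖ * (blochNorm f * Gr) := by
      unfold wco
      rw [norm_mul]
      apply mul_le_mul_of_nonneg_left _ (norm_nonneg _)
      rw [hGrdef]
      exact growth_le_r hf (hmaps zero_mem_D1) (hφr' 0 zero_mem_D1) hr'1
    calc ‖(wco u φ f) 0‖ + blochSemi (wco u φ f)
        ≤ ‖u 0‖ * (blochNorm f * Gr) + (blochSemi u * Gr + A / (1 - r'^2)) * blochNorm f :=
          add_le_add h2 h1
      _ = Ctot * blochNorm f := by rw [hCtotdef]; ring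


/-- M(B,φ) = B iff ‖φ‖_∞ < 1 and φ ∈ M(B). -/
theorem stmt_3 (φ : ℂ → ℂ) (hφ : AnalyticOnD φ) (hmaps : Set.MapsTo φ D1 D1) :
    (∀ u, InBloch u → BddOnBloch (wco u φ)) ↔
      ((∃ r : ℝ, r < 1 ∧ ∀ z ∈ D1, ‖φ z‖ ≤ r) ∧ BddOnBloch (mult φ)) := by
  constructor
  · intro H
    exact ⟨forward_r hφ hmaps H, forward_mult hφ hmaps H⟩
  · rintro ⟨⟨r, hr1, hφr⟩, hM⟩ u hu
    exact reverse_dir hφ hmaps hr1 hφr hM u hu
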